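/- arXiv:1804.00961 — 4 statements merged into one kernel-verified Lean document; each statement's English description precedes it below -/
import Mathlib

section
/- The function x ↦ λ(x) is increasing on [2,∞), i.e. for all 2 ≤ x ≤ x' one has λ(x) ≤ λ(x'). -/
open MeasureTheory Real Set Filter Topology

/-- The integrand of `lam`, with its continuous extension `x(x-1)/2` at `p = 0`. -/
noncomputable def lamInt (x p : ℝ) : ℝ :=
  if p = 0 then x * (x - 1) / 2
  else (1 - (1 - p) ^ x - x * p * (1 - p) ^ (x - 1)) / p ^ 2

/-- The total jump rate function `λ(x)` of the `Λ`-coalescent. -/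
noncomputable def lam (Λ : Measure ℝ) (x : ℝ) : ℝ :=
  ∫ p in Set.Icc (0:ℝ) 1, lamInt x p ∂Λ

namespace LamAux

/-- derivative of `q ↦ 1 - q^x - x(1-q)q^(x-1)` -/
lemma hasDerivAt_k (x : ℝ) (hx : 2 ≤ x) (q : ℝ) :
    HasDerivAt (fun q : ℝ => 1 - q ^ x - x * (1 - q) * q ^ (x - 1))
      (-(x * q ^ (x - 1)) - (x * (-1) * q ^ (x - 1) + x * (1 - q) * ((x - 1) * q ^ (x - 2)))) q := by
  have h1 : HasDerivAt (fun q : ℝ => q ^ x) (x * q ^ (x - 1)) q :=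
    Real.hasDerivAt_rpow_const (Or.inr (by linarith))
  have h2 : HasDerivAt (fun q : ℝ => q ^ (x - 1)) ((x - 1) * q ^ (x - 1 - 1)) q :=
    Real.hasDerivAt_rpow_const (Or.inr (by linarith))
  have h2' : HasDerivAt (fun q : ℝ => q ^ (x - 1)) ((x - 1) * q ^ (x - 2)) q := by
    convert h2 using 2; ring
  have hm1 : HasDerivAt (fun q : ℝ => x * (1 - q)) (x * (-1)) q :=
    ((hasDerivAt_id q).const_sub 1).const_mul x
  exact (h1.const_sub 1).sub (hm1.mul h2')

lemma k_antitone (x : ℝ) (hx : 2 ≤ x) :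
    AntitoneOn (fun q : ℝ => 1 - q ^ x - x * (1 - q) * q ^ (x - 1)) (Icc 0 1) := by
  apply antitoneOn_of_deriv_nonpos (convex_Icc 0 1)
  · exact fun q _ => (hasDerivAt_k x hx q).continuousAt.continuousWithinAt
  · exact fun q _ => (hasDerivAt_k x hx q).differentiableAt.differentiableWithinAt
  · intro q hq
    rw [interior_Icc] at hq
    rw [(hasDerivAt_k x hx q).deriv]
    have hq0 : (0:ℝ) < q := hq.1
    have hq1 : q < 1 := hq.2
    have e1 : q ^ (x - 1) = q ^ (x - 2) * q := by
      rw [← Real.rpow_add_one hq0.ne' (x - 2)]; ring_nf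
    rw [e1]
    have hA : (0:ℝ) ≤ q ^ (x - 2) := (Real.rpow_pos_of_pos hq0 _).le
    nlinarith [mul_nonneg (mul_nonneg (mul_nonneg (by linarith : (0:ℝ) ≤ x)
      (by linarith : (0:ℝ) ≤ x - 1)) (by linarith : (0:ℝ) ≤ 1 - q)) hA]

lemma k_nonneg (x : ℝ) (hx : 2 ≤ x) {q : ℝ} (hq : q ∈ Icc (0:ℝ) 1) :
    0 ≤ 1 - q ^ x - x * (1 - q) * q ^ (x - 1) := by
  have h := k_antitone x hx hq (right_mem_Icc.2 zero_le_one) hq.2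
  simp only [Real.one_rpow] at h
  nlinarith [h]

/-- derivative of the upper-bound comparison function -/
lemma hasDerivAt_h (x : ℝ) (hx : 2 ≤ x) (q : ℝ) :
    HasDerivAt (fun q : ℝ => x * (x - 1) / 2 * (1 - q) ^ (2:ℕ)
        - (1 - q ^ x - x * (1 - q) * q ^ (x - 1)))
      (x * (x - 1) / 2 * (2 * (1 - q) * (-1))
        - (-(x * q ^ (x - 1)) - (x * (-1) * q ^ (x - 1) + x * (1 - q) * ((x - 1) * q ^ (x - 2))))) q := by
  have hp : HasDerivAt (fun q : ℝ => x * (x - 1) / 2 * (1 - q) ^ (2:ℕ))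
      (x * (x - 1) / 2 * (2 * (1 - q) * (-1))) q := by
    have : HasDerivAt (fun q : ℝ => (1 - q) ^ (2:ℕ)) ((2:ℕ) * (1 - q) ^ (2 - 1) * (-1)) q :=
      ((hasDerivAt_id q).const_sub 1).pow 2
    have := this.const_mul (x * (x - 1) / 2)
    exact this.congr_deriv (by push_cast; ring)
  exact hp.sub (hasDerivAt_k x hx q)

lemma k_le (x : ℝ) (hx : 2 ≤ x) {q : ℝ} (hq : q ∈ Icc (0:ℝ) 1) :
    1 - q ^ x - x * (1 - q) * q ^ (x - 1) ≤ x * (x - 1) / 2 * (1 - q) ^ (2:ℕ) := by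
  have hanti : AntitoneOn (fun q : ℝ => x * (x - 1) / 2 * (1 - q) ^ (2:ℕ)
      - (1 - q ^ x - x * (1 - q) * q ^ (x - 1))) (Icc 0 1) := by
    apply antitoneOn_of_deriv_nonpos (convex_Icc 0 1)
    · exact fun q _ => (hasDerivAt_h x hx q).continuousAt.continuousWithinAt
    · exact fun q _ => (hasDerivAt_h x hx q).differentiableAt.differentiableWithinAt
    · intro q hq
      rw [interior_Icc] at hq
      rw [(hasDerivAt_h x hx q).deriv]
      have hq0 : (0:ℝ) < q := hq.1
      have hq1 : q < 1 := hq.2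
      have e1 : q ^ (x - 1) = q ^ (x - 2) * q := by
        rw [← Real.rpow_add_one hq0.ne' (x - 2)]; ring_nf
      rw [e1]
      have hA : (0:ℝ) < q ^ (x - 2) := Real.rpow_pos_of_pos hq0 _
      have hA1 : q ^ (x - 2) ≤ 1 :=
        Real.rpow_le_one hq0.le hq.2.le (by linarith)
      nlinarith [mul_nonneg (mul_nonneg (mul_nonneg (by linarith : (0:ℝ) ≤ x)
        (by linarith : (0:ℝ) ≤ x - 1)) (by linarith : (0:ℝ) ≤ 1 - q))
        (by linarith : (0:ℝ) ≤ 1 - q ^ (x - 2))]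
  have h := hanti hq (right_mem_Icc.2 zero_le_one) hq.2
  simp only [Real.one_rpow, sub_self] at h
  nlinarith [h]

lemma lamInt_nonneg {x p : ℝ} (hx : 2 ≤ x) (hp : p ∈ Icc (0:ℝ) 1) :
    0 ≤ lamInt x p := by
  rcases eq_or_ne p 0 with rfl | hp0
  · rw [lamInt, if_pos rfl]; nlinarith
  · rw [lamInt, if_neg hp0]
    apply div_nonneg _ (sq_nonneg p)
    have h := k_nonneg x hx (q := 1 - p) ⟨by linarith [hp.2], by linarith [hp.1]⟩
    have e : 1 - (1 - p) = p := by ring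
    rw [e] at h
    linarith

lemma lamInt_le {x p : ℝ} (hx : 2 ≤ x) (hp : p ∈ Icc (0:ℝ) 1) :
    lamInt x p ≤ x * (x - 1) / 2 := by
  rcases eq_or_ne p 0 with rfl | hp0
  · rw [lamInt, if_pos rfl]
  · rw [lamInt, if_neg hp0]
    have hp2 : (0:ℝ) < p ^ 2 := by positivity
    rw [div_le_iff₀ hp2]
    have h := k_le x hx (q := 1 - p) ⟨by linarith [hp.2], by linarith [hp.1]⟩
    have e : 1 - (1 - p) = p := by ring
    rw [e] at h
    calc 1 - (1 - p) ^ x - x * p * (1 - p) ^ (x - 1)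
        ≤ x * (x - 1) / 2 * p ^ (2:ℕ) := h
      _ = x * (x - 1) / 2 * p ^ 2 := by norm_num

lemma lamInt_mono {x x' p : ℝ} (hx : 2 ≤ x) (hxx' : x ≤ x') (hp : p ∈ Icc (0:ℝ) 1) :
    lamInt x p ≤ lamInt x' p := by
  have hx' : 2 ≤ x' := hx.trans hxx'
  rcases eq_or_ne p 0 with rfl | hp0
  · rw [lamInt, if_pos rfl, lamInt, if_pos rfl]
    apply div_le_div_of_nonneg_right _ (by norm_num)
    nlinarith
  rcases eq_or_ne p 1 with rfl | hp1
  · have e : ∀ y : ℝ, 2 ≤ y → lamInt y 1 = 1 := by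
      intro y hy
      rw [lamInt, if_neg one_ne_zero, sub_self,
        Real.zero_rpow (by linarith : y ≠ 0), Real.zero_rpow (by linarith : y - 1 ≠ 0)]
      norm_num
    rw [e x hx, e x' hx']
  -- now 0 < p < 1
  have hp0' : 0 < p := lt_of_le_of_ne hp.1 (Ne.symm hp0)
  have hp1' : p < 1 := lt_of_le_of_ne hp.2 hp1
  set q : ℝ := 1 - p with hq
  have hq0 : 0 < q := by simp [hq]; linarith
  have hq1 : q < 1 := by simp [hq]; linarith
  have hder : ∀ y : ℝ, HasDerivAt (fun y : ℝ => 1 - q ^ y - y * p * q ^ (y - 1))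
      (-(q ^ y * Real.log q) - (p * q ^ (y - 1) + y * p * (q ^ (y - 1) * Real.log q * 1))) y := by
    intro y
    have h1 : HasDerivAt (fun y : ℝ => q ^ y) (q ^ y * Real.log q) y :=
      (Real.hasStrictDerivAt_const_rpow hq0 y).hasDerivAt
    have h2 : HasDerivAt (fun y : ℝ => q ^ (y - 1)) (q ^ (y - 1) * Real.log q * 1) y :=
      ((Real.hasStrictDerivAt_const_rpow hq0 (y - 1)).hasDerivAt).comp y
        ((hasDerivAt_id y).sub_const 1)
    have h3 : HasDerivAt (fun y : ℝ => y * p) p y := hasDerivAt_mul_const p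
    exact (h1.const_sub 1).sub (h3.mul h2)
  have hmono : MonotoneOn (fun y : ℝ => 1 - q ^ y - y * p * q ^ (y - 1)) (Ici 2) := by
    apply monotoneOn_of_deriv_nonneg (convex_Ici 2)
    · exact fun y _ => (hder y).continuousAt.continuousWithinAt
    · exact fun y _ => (hder y).differentiableAt.differentiableWithinAt
    · intro y hy
      rw [interior_Ici] at hy
      have hy2 : (2:ℝ) ≤ y := hy.le
      rw [(hder y).deriv]
      set L : ℝ := Real.log q with hL
      set A : ℝ := q ^ (y - 1) with hA
      have hApos : 0 < A := Real.rpow_pos_of_pos hq0 _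
      have eqy : q ^ y = A * q := by
        rw [hA, ← Real.rpow_add_one hq0.ne' (y - 1)]; ring_nf
      have hLe : L ≤ q - 1 := Real.log_le_sub_one_of_pos hq0
      have hLneg : L < 0 := Real.log_neg hq0 hq1
      have hpq : p = 1 - q := by rw [hq]; ring
      have inner : 0 ≤ -(q * L) - p - y * p * L := by
        rw [hpq]
        nlinarith [mul_nonneg (mul_nonneg (by linarith : (0:ℝ) ≤ y - 2)
            (by linarith : (0:ℝ) ≤ 1 - q)) (by linarith : (0:ℝ) ≤ -L),
          mul_nonneg (by linarith : (0:ℝ) ≤ 2 - q) (by linarith : (0:ℝ) ≤ (q - 1) - L),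
          sq_nonneg (1 - q)]
      have : -(q ^ y * L) - (p * A + y * p * (A * L * 1)) = A * (-(q * L) - p - y * p * L) := by
        rw [eqy]; ring
      rw [this]
      exact mul_nonneg hApos.le inner
  have hg := hmono (mem_Ici.2 hx) (mem_Ici.2 hx') hxx'
  simp only at hg
  rw [lamInt, if_neg hp0, lamInt, if_neg hp0]
  apply div_le_div_of_nonneg_right ?_ (by positivity)
  simpa [hq] using hg

lemma lamInt_measurable (x : ℝ) (hx : 2 ≤ x) : Measurable (fun p => lamInt x p) := by
  have hm : ∀ y : ℝ, 0 ≤ y → Measurable (fun p : ℝ => (1 - p) ^ y) := fun y hy =>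
    ((Real.continuous_rpow_const hy).comp (continuous_const.sub continuous_id)).measurable
  unfold lamInt
  refine Measurable.ite (measurableSet_eq (a := (0:ℝ))) measurable_const ?_
  apply Measurable.div _ (measurable_id.pow_const 2)
  apply Measurable.sub
  · exact measurable_const.sub (hm x (by linarith))
  · exact (measurable_const.mul measurable_id).mul (hm (x - 1) (by linarith))

end LamAux

/-- The function `x ↦ λ(x)` is increasing on `[2, ∞)`. -/
theorem lam_increasing (Λ : Measure ℝ) [IsFiniteMeasure Λ] (hΛ : Λ ≠ 0)
    (hsupp : Λ (Set.Icc (0:ℝ) 1)ᶜ = 0) :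
    ∀ x x' : ℝ, 2 ≤ x → x ≤ x' → lam Λ x ≤ lam Λ x' := by
  intro x x' hx hxx'
  have hx' : 2 ≤ x' := hx.trans hxx'
  have hgi : Integrable (fun p => lamInt x' p) (Λ.restrict (Set.Icc 0 1)) := by
    refine Integrable.mono' (integrable_const (x' * (x' - 1) / 2))
      (LamAux.lamInt_measurable x' hx').aestronglyMeasurable ?_
    rw [ae_restrict_iff' measurableSet_Icc]
    refine ae_of_all _ fun p hp => ?_
    rw [Real.norm_eq_abs, abs_of_nonneg (LamAux.lamInt_nonneg hx' hp)]
    exact LamAux.lamInt_le hx' hp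
  apply integral_mono_of_nonneg ?_ hgi ?_
  · rw [EventuallyLE, ae_restrict_iff' measurableSet_Icc]
    exact ae_of_all _ fun p hp => LamAux.lamInt_nonneg hx hp
  · rw [EventuallyLE, ae_restrict_iff' measurableSet_Icc]
    exact ae_of_all _ fun p hp => LamAux.lamInt_mono hx hxx' hp
end

section
/- For every x ≥ 2 one has the representation λ(x)/(x(x−1)) = Λ({0})/2 + ∫_0^1 y (1−y)^{x−2} T(y) dy; consequently the function x ↦ λ(x)/(x(x−1)) is decreasing on [2,∞). -/
open MeasureTheory Real Set Filter Topology

/-- `T(y) = ∫_{(y,1]} p⁻² Λ(dp)`. -/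
noncomputable def T (Λ : Measure ℝ) (y : ℝ) : ℝ :=
  ∫ p in Set.Ioc y 1, 1 / p ^ 2 ∂Λ

lemma cont_pow (x : ℝ) (hx : 2 ≤ x) : Continuous fun y : ℝ => (1 - y) ^ (x - 2) := by
  rcases eq_or_lt_of_le hx with h | h
  · have h0 : x - 2 = 0 := by linarith
    simp only [h0, Real.rpow_zero]
    exact continuous_const
  · have hc : Continuous fun t : ℝ => t ^ (x - 2) := by
      rw [continuous_iff_continuousAt]
      intro t
      exact Real.continuousAt_rpow_const t (x - 2) (Or.inr (by linarith))
    exact hc.comp (continuous_const.sub continuous_id)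

lemma hasDeriv (x : ℝ) (hx : 2 ≤ x) (y : ℝ) :
    HasDerivAt (fun t : ℝ => (1 - (1 - t) ^ x - x * t * (1 - t) ^ (x - 1)) / (x * (x - 1)))
      (y * (1 - y) ^ (x - 2)) y := by
  have h1 : HasDerivAt (fun t : ℝ => 1 - t) (-1) y := by
    simpa using (hasDerivAt_id y).const_sub 1
  have h2 : HasDerivAt (fun t : ℝ => (1 - t) ^ x) (-1 * x * (1 - y) ^ (x - 1)) y :=
    h1.rpow_const (Or.inr (by linarith))
  have h3 : HasDerivAt (fun t : ℝ => (1 - t) ^ (x - 1)) (-1 * (x - 1) * (1 - y) ^ (x - 1 - 1)) y :=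
    h1.rpow_const (Or.inr (by linarith))
  have h4 : HasDerivAt (fun t : ℝ => x * t) x y := by
    simpa using (hasDerivAt_id y).const_mul x
  have h5 := h4.mul h3
  have h6 := (h2.const_sub 1).sub h5
  have h7 := h6.div_const (x * (x - 1))
  refine h7.congr_deriv ?_
  have e : x - 1 - 1 = x - 2 := by ring
  rw [e]
  have hx0 : x ≠ 0 := by linarith
  have hx1 : x - 1 ≠ 0 := by linarith
  field_simp
  ring

lemma integral_h (x : ℝ) (hx : 2 ≤ x) (p : ℝ) :
    ∫ y in (0:ℝ)..p, y * (1 - y) ^ (x - 2) =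
      (1 - (1 - p) ^ x - x * p * (1 - p) ^ (x - 1)) / (x * (x - 1)) := by
  rw [intervalIntegral.integral_eq_sub_of_hasDerivAt (fun t _ => hasDeriv x hx t)
    ((continuous_id.mul (cont_pow x hx)).intervalIntegrable 0 p)]
  norm_num

lemma integral_h_nonneg (x : ℝ) (hx : 2 ≤ x) (p : ℝ) (hp0 : 0 ≤ p) (hp1 : p ≤ 1) :
    0 ≤ ∫ y in (0:ℝ)..p, y * (1 - y) ^ (x - 2) := by
  apply intervalIntegral.integral_nonneg hp0
  intro y hy
  exact mul_nonneg hy.1 (Real.rpow_nonneg (by linarith [hy.2]) _)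

lemma integral_h_le (x : ℝ) (hx : 2 ≤ x) (p : ℝ) (hp0 : 0 ≤ p) (hp1 : p ≤ 1) :
    (∫ y in (0:ℝ)..p, y * (1 - y) ^ (x - 2)) ≤ p ^ 2 / 2 := by
  have h1 : (∫ y in (0:ℝ)..p, y * (1 - y) ^ (x - 2)) ≤ ∫ y in (0:ℝ)..p, y := by
    apply intervalIntegral.integral_mono_on hp0
      ((continuous_id.mul (cont_pow x hx)).intervalIntegrable 0 p)
      (continuous_id.intervalIntegrable 0 p)
    intro y hy
    have hy0 : 0 ≤ y := hy.1
    have hy1 : y ≤ 1 := le_trans hy.2 hp1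
    calc y * (1 - y) ^ (x - 2) ≤ y * 1 := by
          apply mul_le_mul_of_nonneg_left _ hy0
          exact Real.rpow_le_one (by linarith) (by linarith) (by linarith)
      _ = y := mul_one y
  simpa [integral_id] using h1

lemma cont_base_pow (e : ℝ) (he : 0 ≤ e) : Continuous fun t : ℝ => (1 - t) ^ e :=
  (Real.continuous_rpow_const he).comp (continuous_const.sub continuous_id)

lemma meas_lamInt (x : ℝ) (hx : 2 ≤ x) : Measurable (lamInt x) := by
  unfold lamInt
  refine Measurable.ite measurableSet_eq measurable_const ?_
  apply Measurable.div
  · exact (measurable_const.sub (cont_base_pow x (by linarith)).measurable).sub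
      ((measurable_const.mul measurable_id).mul (cont_base_pow (x-1) (by linarith)).measurable)
  · exact measurable_id.pow_const 2

lemma lamInt_eq (x : ℝ) (hx : 2 ≤ x) (p : ℝ) (hp : p ≠ 0) :
    lamInt x p = x * (x - 1) * (∫ y in (0:ℝ)..p, y * (1 - y) ^ (x - 2)) / p ^ 2 := by
  rw [lamInt, if_neg hp, integral_h x hx p]
  have hx0 : x ≠ 0 := by linarith
  have hx1 : x - 1 ≠ 0 := by linarith
  field_simp

lemma lamInt_nonneg (x : ℝ) (hx : 2 ≤ x) (p : ℝ) (hp : p ∈ Set.Icc (0:ℝ) 1) :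
    0 ≤ lamInt x p := by
  rcases eq_or_ne p 0 with h | h
  · rw [h, lamInt, if_pos rfl]; nlinarith
  · rw [lamInt_eq x hx p h]
    have hp0 : 0 < p := lt_of_le_of_ne hp.1 (Ne.symm h)
    have hG := integral_h_nonneg x hx p hp.1 hp.2
    have hxx : (0:ℝ) ≤ x * (x - 1) := by nlinarith
    exact div_nonneg (mul_nonneg hxx hG) (sq_nonneg p)

lemma lamInt_le (x : ℝ) (hx : 2 ≤ x) (p : ℝ) (hp : p ∈ Set.Icc (0:ℝ) 1) :
    lamInt x p ≤ x * (x - 1) / 2 := by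
  rcases eq_or_ne p 0 with h | h
  · rw [h, lamInt, if_pos rfl]
  · rw [lamInt_eq x hx p h]
    have hp0 : 0 < p := lt_of_le_of_ne hp.1 (Ne.symm h)
    have hle := integral_h_le x hx p hp.1 hp.2
    rw [div_le_iff₀ (by positivity)]
    have hxx : 0 ≤ x * (x - 1) := by nlinarith
    calc x * (x - 1) * (∫ y in (0:ℝ)..p, y * (1 - y) ^ (x - 2))
        ≤ x * (x - 1) * (p ^ 2 / 2) := mul_le_mul_of_nonneg_left hle hxx
      _ = x * (x - 1) / 2 * p ^ 2 := by ring


lemma fubini_key (Λ : Measure ℝ) [IsFiniteMeasure Λ] (x : ℝ) (hx : 2 ≤ x) :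
    (∫ p in Set.Ioc (0:ℝ) 1, lamInt x p ∂Λ)
        = x * (x - 1) * ∫ y in Set.Ioc (0:ℝ) 1, y * (1 - y) ^ (x - 2) * T Λ y ∧
      IntegrableOn (fun y => y * (1 - y) ^ (x - 2) * T Λ y) (Set.Ioc (0:ℝ) 1) volume := by
  set μ := Λ.restrict (Set.Ioc (0:ℝ) 1) with hμ
  set ν := volume.restrict (Set.Ioc (0:ℝ) 1) with hν
  set g : ℝ × ℝ → ℝ :=
    fun z => if z.2 < z.1 then z.2 * (1 - z.2) ^ (x - 2) / z.1 ^ 2 else 0 with hg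
  -- measurability
  have hgmeas : Measurable g := by
    refine Measurable.ite (measurableSet_lt measurable_snd measurable_fst) ?_ measurable_const
    exact (measurable_snd.mul
      ((cont_base_pow (x - 2) (by linarith)).measurable.comp measurable_snd)).div
      (measurable_fst.pow_const 2)
  -- pointwise descriptions
  have hgy : ∀ p y : ℝ, g (p, y) =
      (Set.Iio p).indicator (fun y => y * (1 - y) ^ (x - 2) / p ^ 2) y := by
    intro p y
    by_cases h : y < p <;> simp [hg, Set.indicator, h]
  have hgp : ∀ p y : ℝ, g (p, y) =
      (Set.Ioi y).indicator (fun p => y * (1 - y) ^ (x - 2) * (1 / p ^ 2)) p := by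
    intro p y
    by_cases h : y < p <;> simp [hg, Set.indicator, h, Set.mem_Ioi, mul_one_div, div_eq_mul_inv]
  -- g is nonneg where it matters
  have hgnn : ∀ p : ℝ, ∀ y ∈ Set.Ioc (0:ℝ) 1, 0 ≤ g (p, y) := by
    intro p y hy
    rw [hg]
    dsimp only
    split_ifs with h
    · have h1 : (0:ℝ) ≤ 1 - y := by linarith [hy.2]
      exact div_nonneg (mul_nonneg hy.1.le (Real.rpow_nonneg h1 (x - 2))) (sq_nonneg p)
    · exact le_refl 0
  -- inner integral in y
  have inner_y : ∀ p ∈ Set.Ioc (0:ℝ) 1,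
      (∫ y, g (p, y) ∂ν) = (∫ y in (0:ℝ)..p, y * (1 - y) ^ (x - 2)) / p ^ 2 := by
    intro p hp
    simp_rw [hgy]
    rw [hν, setIntegral_indicator measurableSet_Iio]
    have hset : Set.Ioc (0:ℝ) 1 ∩ Set.Iio p = Set.Ioo 0 p := by
      ext t
      simp only [Set.mem_inter_iff, Set.mem_Ioc, Set.mem_Iio, Set.mem_Ioo]
      constructor
      · rintro ⟨⟨h1, _⟩, h3⟩; exact ⟨h1, h3⟩
      · rintro ⟨h1, h2⟩; exact ⟨⟨h1, h2.le.trans hp.2⟩, h2⟩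
    rw [hset, ← MeasureTheory.integral_Ioc_eq_integral_Ioo,
      intervalIntegral.integral_of_le hp.1.le, integral_div]
  -- inner integral in p
  have inner_p : ∀ y ∈ Set.Ioc (0:ℝ) 1,
      (∫ p, g (p, y) ∂μ) = y * (1 - y) ^ (x - 2) * T Λ y := by
    intro y hy
    simp_rw [hgp]
    rw [hμ, setIntegral_indicator measurableSet_Ioi]
    have hset : Set.Ioc (0:ℝ) 1 ∩ Set.Ioi y = Set.Ioc y 1 := by
      ext t
      simp only [Set.mem_inter_iff, Set.mem_Ioc, Set.mem_Ioi]
      constructor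
      · rintro ⟨⟨_, h2⟩, h3⟩; exact ⟨h3, h2⟩
      · rintro ⟨h1, h2⟩; exact ⟨⟨hy.1.trans h1, h2⟩, h1⟩
    rw [hset, MeasureTheory.integral_const_mul]
    rfl
  -- integrability on the product
  have hInt : Integrable g (μ.prod ν) := by
    refine (integrable_prod_iff hgmeas.aestronglyMeasurable).2 ⟨?_, ?_⟩
    · filter_upwards [ae_restrict_mem measurableSet_Ioc] with p hp
      apply Measure.integrableOn_of_bounded (M := 1 / p ^ 2) measure_Ioc_lt_top.ne
        (hgmeas.comp measurable_prodMk_left).aestronglyMeasurable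
      filter_upwards [ae_restrict_mem measurableSet_Ioc] with y hy
      show ‖g (p, y)‖ ≤ 1 / p ^ 2
      rw [norm_of_nonneg (hgnn p y hy)]
      rw [hg]
      dsimp only
      split_ifs with h
      · have h1 : (1 - y) ^ (x - 2) ≤ 1 :=
          Real.rpow_le_one (by linarith [hy.2]) (by linarith [hy.1]) (by linarith)
        have h2 : y * (1 - y) ^ (x - 2) ≤ 1 := by
          nlinarith [Real.rpow_nonneg (show (0:ℝ) ≤ 1 - y by linarith [hy.2]) (x - 2), hy.1, hy.2]
        gcongr
      · positivity
    · apply Integrable.mono' (integrable_const (1/2 : ℝ))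
        hgmeas.aestronglyMeasurable.norm.integral_prod_right'
      filter_upwards [ae_restrict_mem measurableSet_Ioc] with p hp
      have heq : (∫ y, ‖g (p, y)‖ ∂ν) = ∫ y, g (p, y) ∂ν := by
        apply integral_congr_ae
        filter_upwards [ae_restrict_mem measurableSet_Ioc] with y hy
        exact norm_of_nonneg (hgnn p y hy)
      rw [heq, inner_y p hp, Real.norm_eq_abs,
        abs_of_nonneg (div_nonneg (integral_h_nonneg x hx p hp.1.le hp.2) (sq_nonneg p))]
      rw [div_le_iff₀ (pow_pos hp.1 2)]
      have := integral_h_le x hx p hp.1.le hp.2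
      linarith
  -- Fubini
  have swap : (∫ p, (∫ y, g (p, y) ∂ν) ∂μ) = ∫ y, (∫ p, g (p, y) ∂μ) ∂ν :=
    integral_integral_swap hInt
  have E1 : (∫ p, lamInt x p ∂μ) = x * (x - 1) * ∫ p, (∫ y, g (p, y) ∂ν) ∂μ := by
    rw [← MeasureTheory.integral_const_mul]
    apply integral_congr_ae
    filter_upwards [ae_restrict_mem measurableSet_Ioc] with p hp
    rw [inner_y p hp, lamInt_eq x hx p (ne_of_gt hp.1), mul_div_assoc]
  have E2 : (∫ y, (∫ p, g (p, y) ∂μ) ∂ν) = ∫ y in Set.Ioc (0:ℝ) 1, y * (1 - y) ^ (x - 2) * T Λ y := by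
    apply integral_congr_ae
    filter_upwards [ae_restrict_mem measurableSet_Ioc] with y hy
    exact inner_p y hy
  constructor
  · rw [show (∫ p in Set.Ioc (0:ℝ) 1, lamInt x p ∂Λ) = ∫ p, lamInt x p ∂μ from rfl,
      E1, swap, E2]
  · apply (hInt.integral_prod_right).congr
    filter_upwards [ae_restrict_mem measurableSet_Ioc] with y hy
    exact inner_p y hy

/-- Representation of `λ(x)/(x(x-1))` and its monotonicity: for every `x ≥ 2`,
`λ(x)/(x(x−1)) = Λ({0})/2 + ∫_0^1 y (1−y)^{x−2} T(y) dy`, and consequently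
`x ↦ λ(x)/(x(x−1))` is decreasing on `[2, ∞)`. -/
theorem lam_div_repr_and_antitone (Λ : Measure ℝ) [IsFiniteMeasure Λ] (hΛ : Λ ≠ 0)
    (hsupp : Λ (Set.Icc (0:ℝ) 1)ᶜ = 0) :
    (∀ x : ℝ, 2 ≤ x →
      lam Λ x / (x * (x - 1)) =
        (Λ {0}).toReal / 2 + ∫ y in (0:ℝ)..1, y * (1 - y) ^ (x - 2) * T Λ y) ∧
    AntitoneOn (fun x => lam Λ x / (x * (x - 1))) (Set.Ici 2) := by
  have repr : ∀ x : ℝ, 2 ≤ x →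
      lam Λ x / (x * (x - 1)) =
        (Λ {0}).toReal / 2 + ∫ y in (0:ℝ)..1, y * (1 - y) ^ (x - 2) * T Λ y := by
    intro x hx
    have hIcc : IntegrableOn (lamInt x) (Set.Icc (0:ℝ) 1) Λ := by
      apply Measure.integrableOn_of_bounded (M := x * (x - 1) / 2) (measure_ne_top Λ _)
        (meas_lamInt x hx).aestronglyMeasurable
      filter_upwards [ae_restrict_mem measurableSet_Icc] with p hp
      rw [Real.norm_eq_abs, abs_of_nonneg (lamInt_nonneg x hx p hp)]
      exact lamInt_le x hx p hp
    have hsplit : lam Λ x = (Λ {0}).toReal * (x * (x - 1) / 2)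
        + ∫ p in Set.Ioc (0:ℝ) 1, lamInt x p ∂Λ := by
      rw [lam]
      have hset : Set.Icc (0:ℝ) 1 = {0} ∪ Set.Ioc 0 1 := by
        rw [Set.singleton_union, Set.Ioc_insert_left zero_le_one]
      rw [hset, setIntegral_union (Set.disjoint_singleton_left.mpr (by simp))
        measurableSet_Ioc
        (hIcc.mono_set (by simp [Set.singleton_subset_iff, zero_le_one]))
        (hIcc.mono_set Set.Ioc_subset_Icc_self)]
      rw [integral_singleton]
      simp [lamInt, smul_eq_mul]
      exact Or.inl rfl
    have hfk := fubini_key Λ x hx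
    have hint01 : (∫ y in (0:ℝ)..1, y * (1 - y) ^ (x - 2) * T Λ y)
        = ∫ y in Set.Ioc (0:ℝ) 1, y * (1 - y) ^ (x - 2) * T Λ y :=
      intervalIntegral.integral_of_le zero_le_one
    rw [hsplit, hfk.1, hint01]
    have hx0 : x ≠ 0 := by linarith
    have hx1 : x - 1 ≠ 0 := by linarith
    field_simp
  refine ⟨repr, ?_⟩
  intro a ha b hb hab
  simp only [Set.mem_Ici] at ha hb
  simp only
  rw [repr a ha, repr b hb]
  apply add_le_add_right
  rw [intervalIntegral.integral_of_le zero_le_one, intervalIntegral.integral_of_le zero_le_one]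
  apply setIntegral_mono_on (fubini_key Λ b hb).2 (fubini_key Λ a ha).2 measurableSet_Ioc
  intro y hy
  have hT : 0 ≤ T Λ y := integral_nonneg fun p => div_nonneg zero_le_one (sq_nonneg p)
  have hpow : (1 - y) ^ (b - 2) ≤ (1 - y) ^ (a - 2) :=
    Real.rpow_le_rpow_of_exponent_ge' (by linarith [hy.2]) (by linarith [hy.1])
      (by linarith) (by linarith)
  exact mul_le_mul_of_nonneg_right (mul_le_mul_of_nonneg_left hpow hy.1.le) hT
end

section
/- For every χ ∈ (0,1) there exist a constant C > 0 and x_0 > 2 such that for all x ≥ x_0 one has |κ'(x) − λ(x)/x²| ≤ C λ(x) x^{−2−χ}; equivalently, λ(x) = x² κ'(x)(1 + O(x^{−χ})) as x → ∞. -/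
open MeasureTheory Real Set Filter Topology

/-- Bernoulli's inequality for real exponents. -/
lemma my_bern {p x : ℝ} (hp : p ≤ 1) (hx : 1 ≤ x) : 1 - x * p ≤ (1 - p) ^ x := by
  have h := one_add_mul_self_le_rpow_one_add (s := -p) (by linarith) hx
  have e : (1 : ℝ) + -p = 1 - p := by ring
  rw [e] at h
  linarith

lemma my_neg_mul_log {t : ℝ} (ht : 0 < t) : -(t * Real.log t) ≤ 1 - t := by
  have h := Real.log_le_sub_one_of_pos (x := t⁻¹) (by positivity)
  rw [Real.log_inv] at h
  have h2 := mul_le_mul_of_nonneg_left h ht.le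
  have ht' : t * (t⁻¹ - 1) = 1 - t := by field_simp
  nlinarith

/-- If `f 0 = 0`, `f` is continuous on `[0,1]` and has nonnegative derivative on `(0,1)`,
then `f ≥ 0` on `[0,1]`. -/
lemma my_nonneg_on_Icc {f f' : ℝ → ℝ} (hc : ContinuousOn f (Icc 0 1))
    (hd : ∀ p ∈ Ioo (0:ℝ) 1, HasDerivAt f (f' p) p)
    (h0 : f 0 = 0) (h' : ∀ p ∈ Ioo (0:ℝ) 1, 0 ≤ f' p) :
    ∀ p ∈ Icc (0:ℝ) 1, 0 ≤ f p := by
  have mono : MonotoneOn f (Icc 0 1) := by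
    apply monotoneOn_of_deriv_nonneg (convex_Icc 0 1) hc
    · rw [interior_Icc]
      exact fun p hp => ((hd p hp).differentiableAt).differentiableWithinAt
    · rw [interior_Icc]
      intro p hp
      rw [(hd p hp).deriv]
      exact h' p hp
  intro p hp
  rw [← h0]
  exact mono (left_mem_Icc.2 zero_le_one) hp hp.1

lemma my_contOn (c : ℝ) (hc : 0 ≤ c) : ContinuousOn (fun p : ℝ => (1 - p) ^ c) (Icc 0 1) :=
  (continuousOn_const.sub continuousOn_id).rpow_const (fun _ _ => Or.inr hc)

lemma my_hd_pow (c : ℝ) {p : ℝ} (hp : p ∈ Ioo (0:ℝ) 1) :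
    HasDerivAt (fun p : ℝ => (1 - p) ^ c) (-(c * (1 - p) ^ (c - 1))) p := by
  have h : HasDerivAt (fun p : ℝ => 1 - p) (-1) p := (hasDerivAt_id p).const_sub 1
  have := h.rpow_const (p := c) (Or.inl (sub_pos.2 hp.2).ne')
  convert this using 1
  ring

lemma my_muInt_upper_aux {x : ℝ} (hx : 3 ≤ x) :
    ∀ p ∈ Icc (0:ℝ) 1, x * p - 1 + (1 - p) ^ x ≤ x * (x - 1) / 2 * p ^ 2 := by
  have key := my_nonneg_on_Icc (f := fun p => x * (x - 1) / 2 * p ^ 2 - (x * p - 1 + (1 - p) ^ x))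
    (f' := fun p => x * (x - 1) * p - x + x * (1 - p) ^ (x - 1))
    ((continuousOn_const.mul (continuousOn_pow 2)).sub
      (((continuousOn_const.mul continuousOn_id).sub continuousOn_const).add
        (my_contOn x (by linarith))))
    (fun p hp => by
      have h1 : HasDerivAt (fun p : ℝ => x * (x - 1) / 2 * p ^ 2) (x * (x - 1) / 2 * (2 * p)) p := by
        simpa using (hasDerivAt_pow 2 p).const_mul (x * (x - 1) / 2)
      have h2 := (((hasDerivAt_id p).const_mul x).sub_const 1).add (my_hd_pow x hp)
      refine (h1.sub h2).congr_deriv ?_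
      ring)
    (by simp [Real.one_rpow])
    (fun p hp => by
      have hb := my_bern (p := p) (x := x - 1) hp.2.le (by linarith)
      have hxb := mul_le_mul_of_nonneg_left hb (show (0:ℝ) ≤ x by linarith)
      show 0 ≤ x * (x - 1) * p - x + x * (1 - p) ^ (x - 1)
      nlinarith [hxb])
  intro p hp
  have := key p hp
  linarith

lemma my_lamInt_upper_aux {x : ℝ} (hx : 3 ≤ x) :
    ∀ p ∈ Icc (0:ℝ) 1, 1 - (1 - p) ^ x - x * p * (1 - p) ^ (x - 1) ≤ x * (x - 1) / 2 * p ^ 2 := by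
  have key := my_nonneg_on_Icc
    (f := fun p => x * (x - 1) / 2 * p ^ 2 - ((1 - (1 - p) ^ x) - x * p * (1 - p) ^ (x - 1)))
    (f' := fun p => x * (x - 1) * p - x * (x - 1) * p * (1 - p) ^ (x - 1 - 1))
    ((continuousOn_const.mul (continuousOn_pow 2)).sub
      ((continuousOn_const.sub (my_contOn x (by linarith))).sub
        ((continuousOn_const.mul continuousOn_id).mul (my_contOn (x - 1) (by linarith)))))
    (fun p hp => by
      have h1 : HasDerivAt (fun p : ℝ => x * (x - 1) / 2 * p ^ 2) (x * (x - 1) / 2 * (2 * p)) p := by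
        simpa using (hasDerivAt_pow 2 p).const_mul (x * (x - 1) / 2)
      have h2 := (my_hd_pow x hp).const_sub 1
      have h3 := ((hasDerivAt_id p).const_mul x).mul (my_hd_pow (x - 1) hp)
      refine (h1.sub (h2.sub h3)).congr_deriv ?_
      simp only [id_eq]
      ring)
    (by simp [Real.one_rpow])
    (fun p hp => by
      have h1 : (1 - p) ^ (x - 1 - 1) ≤ 1 :=
        Real.rpow_le_one (by linarith [hp.2]) (by linarith [hp.1]) (by linarith)
      have h2 : 0 ≤ x * (x - 1) * p :=
        (mul_pos (mul_pos (by linarith) (by linarith)) hp.1).le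
      show 0 ≤ x * (x - 1) * p - x * (x - 1) * p * (1 - p) ^ (x - 1 - 1)
      nlinarith)
  intro p hp
  have := key p hp
  linarith

lemma my_lamInt_lower_aux {x : ℝ} (hx : 3 ≤ x) :
    ∀ p ∈ Icc (0:ℝ) 1,
      x * (x - 1) / 2 * p ^ 2 * (1 - p) ^ (x - 2) ≤ 1 - (1 - p) ^ x - x * p * (1 - p) ^ (x - 1) := by
  have key := my_nonneg_on_Icc
    (f := fun p => ((1 - (1 - p) ^ x) - x * p * (1 - p) ^ (x - 1))
        - x * (x - 1) / 2 * p ^ 2 * (1 - p) ^ (x - 2))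
    (f' := fun p => x * (x - 1) * (x - 2) / 2 * p ^ 2 * (1 - p) ^ (x - 2 - 1))
    (((continuousOn_const.sub (my_contOn x (by linarith))).sub
        ((continuousOn_const.mul continuousOn_id).mul (my_contOn (x - 1) (by linarith)))).sub
      ((continuousOn_const.mul (continuousOn_pow 2)).mul (my_contOn (x - 2) (by linarith))))
    (fun p hp => by
      have h2 := (my_hd_pow x hp).const_sub 1
      have h3 := ((hasDerivAt_id p).const_mul x).mul (my_hd_pow (x - 1) hp)
      have h4 := ((hasDerivAt_pow 2 p).const_mul (x * (x - 1) / 2)).mul (my_hd_pow (x - 2) hp)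
      refine ((h2.sub h3).sub h4).congr_deriv ?_
      have e1 : x - 1 - 1 = x - 2 := by ring
      have e2 : x - 2 - 1 = x - 3 := by ring
      rw [e1, e2]
      simp only [id_eq]
      ring)
    (by simp [Real.one_rpow])
    (fun p hp => by
      show 0 ≤ x * (x - 1) * (x - 2) / 2 * p ^ 2 * (1 - p) ^ (x - 2 - 1)
      have h1 : (0:ℝ) ≤ (1 - p) ^ (x - 2 - 1) := Real.rpow_nonneg (by linarith [hp.2]) _
      have h2 : (0:ℝ) ≤ x * (x - 1) * (x - 2) / 2 * p ^ 2 :=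
        mul_nonneg (div_nonneg (mul_pos (mul_pos (show (0:ℝ) < x by linarith)
          (show (0:ℝ) < x - 1 by linarith)) (show (0:ℝ) < x - 2 by linarith)).le (by norm_num))
          (sq_nonneg p)
      exact mul_nonneg h2 h1)
  intro p hp
  have := key p hp
  linarith

/-- The integrand of `mu`, with its continuous extension `x(x-1)/2` at `p = 0`. -/
noncomputable def muInt (x p : ℝ) : ℝ :=
  if p = 0 then x * (x - 1) / 2
  else (x * p - 1 + (1 - p) ^ x) / p ^ 2

/-- The rate of decrease `μ(x)` of the `Λ`-coalescent. -/
noncomputable def mu (Λ : Measure ℝ) (x : ℝ) : ℝ :=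
  ∫ p in Set.Icc (0:ℝ) 1, muInt x p ∂Λ

/-- The rate of decrease per capita `κ(x) = μ(x)/x`. -/
noncomputable def kappa (Λ : Measure ℝ) (x : ℝ) : ℝ := mu Λ x / x

/-- The `x`-derivative of `muInt`. -/
noncomputable def muDerivInt (x p : ℝ) : ℝ :=
  if p = 0 then x - 1 / 2
  else (p + (1 - p) ^ x * Real.log (1 - p)) / p ^ 2

lemma my_meas_set : MeasurableSet {p : ℝ | p = 0} := by
  simpa using (measurableSet_singleton (0:ℝ))

lemma my_meas_lamInt (x : ℝ) : Measurable (lamInt x) := by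
  unfold lamInt
  refine Measurable.ite my_meas_set measurable_const ?_
  fun_prop

lemma my_meas_muInt (x : ℝ) : Measurable (muInt x) := by
  unfold muInt
  refine Measurable.ite my_meas_set measurable_const ?_
  fun_prop

lemma my_meas_muDerivInt (x : ℝ) : Measurable (muDerivInt x) := by
  unfold muDerivInt
  refine Measurable.ite my_meas_set measurable_const ?_
  have h1 : Measurable (fun p : ℝ => (1 - p) ^ x) := by fun_prop
  have h2 : Measurable (fun p : ℝ => Real.log (1 - p)) :=
    Real.measurable_log.comp (measurable_const.sub measurable_id)
  exact (measurable_id.add (h1.mul h2)).div (measurable_id.pow_const 2)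

lemma my_meas_rpow (c : ℝ) : Measurable (fun p : ℝ => (1 - p) ^ c) := by fun_prop

lemma my_muDerivInt_bounds {y p : ℝ} (hy : 1 ≤ y) (hp : p ∈ Icc (0:ℝ) 1) :
    0 ≤ muDerivInt y p ∧ muDerivInt y p ≤ y := by
  unfold muDerivInt
  rcases eq_or_lt_of_le hp.1 with h0 | h0
  · rw [if_pos h0.symm]; constructor <;> linarith
  rw [if_neg h0.ne']
  rcases eq_or_lt_of_le hp.2 with h1 | h1
  · subst h1
    simp only [sub_self, Real.log_zero, Real.zero_rpow (show y ≠ 0 by linarith), mul_zero,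
      add_zero, one_pow, div_one]
    constructor <;> linarith
  -- 0 < p < 1
  have ht : (0:ℝ) < 1 - p := by linarith
  have ht1 : (1:ℝ) - p ≤ 1 := by linarith
  have hL : Real.log (1 - p) ≤ 0 := Real.log_nonpos (by linarith) ht1
  have hpow_le : (1 - p) ^ y ≤ 1 - p := by
    have := Real.rpow_le_rpow_of_exponent_ge ht ht1 hy
    rwa [Real.rpow_one] at this
  have hpow_nonneg : (0:ℝ) ≤ (1 - p) ^ y := Real.rpow_nonneg ht.le y
  have hnum_lo : 0 ≤ p + (1 - p) ^ y * Real.log (1 - p) := by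
    have hml := my_neg_mul_log ht
    -- (1-p)^y * (-log(1-p)) ≤ (1-p) * (-log(1-p)) ≤ 1 - (1-p) = p
    have h2 : (1 - p) ^ y * -Real.log (1 - p) ≤ (1 - p) * -Real.log (1 - p) :=
      mul_le_mul_of_nonneg_right hpow_le (by linarith)
    nlinarith
  have hnum_hi : p + (1 - p) ^ y * Real.log (1 - p) ≤ y * p ^ 2 := by
    have hlog : Real.log (1 - p) ≤ -p := by
      have := Real.log_le_sub_one_of_pos ht
      linarith
    have h2 : (1 - p) ^ y * Real.log (1 - p) ≤ (1 - p) ^ y * (-p) :=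
      mul_le_mul_of_nonneg_left hlog hpow_nonneg
    have hb := my_bern (p := p) (x := y) hp.2 hy
    nlinarith
  constructor
  · positivity
  · rw [div_le_iff₀ (by positivity)]
    nlinarith

lemma my_muInt_bounds {x p : ℝ} (hx : 3 ≤ x) (hp : p ∈ Icc (0:ℝ) 1) :
    0 ≤ muInt x p ∧ muInt x p ≤ x * (x - 1) / 2 := by
  unfold muInt
  rcases eq_or_lt_of_le hp.1 with h0 | h0
  · rw [if_pos h0.symm]; constructor <;> nlinarith
  rw [if_neg h0.ne']
  have hlo : 0 ≤ x * p - 1 + (1 - p) ^ x := by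
    have hb := my_bern (p := p) (x := x) hp.2 (by linarith)
    linarith
  have hhi := my_muInt_upper_aux hx p hp
  constructor
  · positivity
  · rw [div_le_iff₀ (by positivity)]
    nlinarith

lemma my_lamInt_bounds {x p : ℝ} (hx : 3 ≤ x) (hp : p ∈ Icc (0:ℝ) 1) :
    x * (x - 1) / 2 * (1 - p) ^ (x - 2) ≤ lamInt x p ∧ lamInt x p ≤ x * (x - 1) / 2 := by
  unfold lamInt
  rcases eq_or_lt_of_le hp.1 with h0 | h0
  · rw [if_pos h0.symm, ← h0]
    norm_num [Real.one_rpow]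
  rw [if_neg h0.ne']
  have hlo := my_lamInt_lower_aux hx p hp
  have hhi := my_lamInt_upper_aux hx p hp
  constructor
  · rw [le_div_iff₀ (by positivity)]
    nlinarith
  · rw [div_le_iff₀ (by positivity)]
    nlinarith

lemma my_gInt_bounds {x p : ℝ} (hx : 3 ≤ x) (hp : p ∈ Icc (0:ℝ) 1) :
    0 ≤ x * muDerivInt x p - muInt x p - lamInt x p ∧
      x * muDerivInt x p - muInt x p - lamInt x p ≤ x * (1 - p) ^ (x - 2) := by
  unfold muDerivInt muInt lamInt
  rcases eq_or_lt_of_le hp.1 with h0 | h0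
  · rw [if_pos h0.symm, if_pos h0.symm, if_pos h0.symm, ← h0]
    norm_num [Real.one_rpow]
    constructor <;> nlinarith
  rw [if_neg h0.ne', if_neg h0.ne', if_neg h0.ne']
  rcases eq_or_lt_of_le hp.2 with h1 | h1
  · subst h1
    simp only [sub_self, Real.zero_rpow (show x ≠ 0 by linarith),
      Real.zero_rpow (show x - 1 ≠ 0 by linarith), Real.zero_rpow (show x - 2 ≠ 0 by linarith),
      Real.log_zero]
    norm_num
  have ht : (0:ℝ) < 1 - p := by linarith
  have ht1 : (1:ℝ) - p ≤ 1 := by linarith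
  set L := Real.log (1 - p) with hL
  have hq_lo : 0 ≤ p + (1 - p) * L := by
    have := my_neg_mul_log ht
    nlinarith
  have hq_hi : p + (1 - p) * L ≤ p ^ 2 := by
    have hlog : L ≤ -p := by
      have := Real.log_le_sub_one_of_pos ht
      simp only [hL]; linarith
    nlinarith
  have hsplit : (1 - p) ^ x = (1 - p) ^ (x - 1) * (1 - p) := by
    have h := Real.rpow_add ht (x - 1) 1
    rw [Real.rpow_one] at h
    rw [show x - 1 + 1 = x by ring] at h
    exact h
  have hpow1 : (0:ℝ) ≤ (1 - p) ^ (x - 1) := Real.rpow_nonneg ht.le _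
  have hEq : x * ((p + (1 - p) ^ x * L) / p ^ 2)
      - (x * p - 1 + (1 - p) ^ x) / p ^ 2
      - (1 - (1 - p) ^ x - x * p * (1 - p) ^ (x - 1)) / p ^ 2
      = x * (1 - p) ^ (x - 1) * (p + (1 - p) * L) / p ^ 2 := by
    rw [hsplit]
    field_simp
    ring
  rw [hEq]
  have hle : (1 - p) ^ (x - 1) ≤ (1 - p) ^ (x - 2) :=
    Real.rpow_le_rpow_of_exponent_ge ht ht1 (by linarith)
  constructor
  · positivity
  · rw [div_le_iff₀ (by positivity)]
    have hp2 : (0:ℝ) < p ^ 2 := by positivity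
    have h1 : x * (1 - p) ^ (x - 1) * (p + (1 - p) * L) ≤ x * (1 - p) ^ (x - 1) * p ^ 2 :=
      mul_le_mul_of_nonneg_left hq_hi (by positivity)
    have h2 : x * (1 - p) ^ (x - 1) * p ^ 2 ≤ x * (1 - p) ^ (x - 2) * p ^ 2 := by
      have := mul_le_mul_of_nonneg_left hle (show (0:ℝ) ≤ x by linarith)
      nlinarith
    linarith

lemma my_hasDerivAt_muInt {p y : ℝ} (hp : p ∈ Icc (0:ℝ) 1) (hy : 1 < y) :
    HasDerivAt (fun z => muInt z p) (muDerivInt y p) y := by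
  rcases eq_or_lt_of_le hp.1 with h0 | h0
  · have hfun : (fun z => muInt z p) = fun z => z * (z - 1) / 2 := by
      funext z; rw [muInt, if_pos h0.symm]
    rw [hfun, muDerivInt, if_pos h0.symm]
    have h := ((hasDerivAt_id y).mul ((hasDerivAt_id y).sub_const 1)).div_const 2
    refine h.congr_deriv ?_
    simp only [id_eq]
    ring
  have hfun : (fun z => muInt z p) = fun z => (z * p - 1 + (1 - p) ^ z) / p ^ 2 := by
    funext z; rw [muInt, if_neg h0.ne']
  rw [hfun, muDerivInt, if_neg h0.ne']
  rcases eq_or_lt_of_le hp.2 with h1 | h1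
  · -- p = 1
    subst h1
    have hev : (fun z => (z * 1 - 1 + (1 - 1 : ℝ) ^ z) / 1 ^ 2) =ᶠ[𝓝 y]
        fun z => (z * 1 - 1 + 0) / 1 ^ 2 := by
      filter_upwards [eventually_gt_nhds (show (0:ℝ) < y by linarith)] with z hz
      rw [sub_self, Real.zero_rpow hz.ne']
    have h : HasDerivAt (fun z : ℝ => (z * 1 - 1 + 0) / 1 ^ 2) 1 y := by
      have := (((hasDerivAt_id y).mul_const 1).sub_const 1).add_const 0 |>.div_const (1 ^ 2)
      refine this.congr_deriv ?_
      norm_num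
    have h2 := h.congr_of_eventuallyEq hev
    refine h2.congr_deriv ?_
    rw [sub_self, Real.zero_rpow (show y ≠ 0 by linarith), Real.log_zero]
    norm_num
  · -- 0 < p < 1
    have ht : (0:ℝ) < 1 - p := by linarith
    have hr := (Real.hasStrictDerivAt_const_rpow ht y).hasDerivAt
    have h := (((hasDerivAt_id y).mul_const p).sub_const 1).add hr |>.div_const (p ^ 2)
    refine h.congr_deriv ?_
    ring

lemma my_int_of_bound {Λ : Measure ℝ} [IsFiniteMeasure Λ] {f : ℝ → ℝ} (hm : Measurable f)
    (C : ℝ) (hb : ∀ p ∈ Icc (0:ℝ) 1, ‖f p‖ ≤ C) :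
    Integrable f (Λ.restrict (Icc 0 1)) := by
  refine Integrable.mono' (integrable_const C) hm.aestronglyMeasurable ?_
  filter_upwards [ae_restrict_mem measurableSet_Icc] with p hp
  exact hb p hp

lemma my_hasDerivAt_mu (Λ : Measure ℝ) [IsFiniteMeasure Λ] {x : ℝ} (hx : 3 ≤ x) :
    Integrable (muDerivInt x) (Λ.restrict (Icc 0 1)) ∧
      HasDerivAt (mu Λ) (∫ p in Icc (0:ℝ) 1, muDerivInt x p ∂Λ) x := by
  have hmain := hasDerivAt_integral_of_dominated_loc_of_deriv_le
    (μ := Λ.restrict (Icc 0 1)) (F := fun y p => muInt y p) (F' := fun y p => muDerivInt y p)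
    (x₀ := x) (bound := fun _ => 2 * x) (s := Metric.ball x (x - 2)) (Metric.ball_mem_nhds x (by linarith))
    (Eventually.of_forall fun y => (my_meas_muInt y).aestronglyMeasurable)
    (my_int_of_bound (my_meas_muInt x) (x * (x - 1) / 2) (fun p hp => by
      have h := my_muInt_bounds hx hp
      rw [Real.norm_eq_abs, abs_of_nonneg h.1]
      exact h.2))
    ((my_meas_muDerivInt x).aestronglyMeasurable)
    (by
      filter_upwards [ae_restrict_mem measurableSet_Icc] with p hp
      intro y hy
      rw [Metric.mem_ball, Real.dist_eq] at hy
      have hy1 : 1 < y := by cases abs_lt.1 hy; linarith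
      have hy2 : y ≤ 2 * x := by cases abs_lt.1 hy; linarith
      have h := my_muDerivInt_bounds hy1.le hp
      rw [Real.norm_eq_abs, abs_of_nonneg h.1]
      linarith [h.2])
    (integrable_const (2 * x))
    (by
      filter_upwards [ae_restrict_mem measurableSet_Icc] with p hp
      intro y hy
      rw [Metric.mem_ball, Real.dist_eq] at hy
      have hy1 : 1 < y := by cases abs_lt.1 hy; linarith
      exact my_hasDerivAt_muInt hp hy1)
  exact hmain

/-- For every `χ ∈ (0,1)` there are `C > 0` and `x₀ > 2` such that for all `x ≥ x₀`,
`|κ'(x) − λ(x)/x²| ≤ C λ(x) x^{−2−χ}`; that is, `λ(x) = x² κ'(x)(1 + O(x^{−χ}))`. -/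
theorem kappa_deriv_asymp (Λ : Measure ℝ) [IsFiniteMeasure Λ] (hΛ : Λ ≠ 0)
    (hsupp : Λ (Set.Icc (0:ℝ) 1)ᶜ = 0) :
    ∀ χ : ℝ, 0 < χ → χ < 1 →
      ∃ C : ℝ, 0 < C ∧ ∃ x₀ : ℝ, 2 < x₀ ∧ ∀ x : ℝ, x₀ ≤ x →
        |deriv (kappa Λ) x - lam Λ x / x ^ 2| ≤ C * lam Λ x * x ^ (-2 - χ) := by
  intro χ hχ0 hχ1
  refine ⟨4, by norm_num, 4, by norm_num, fun x hx => ?_⟩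
  have hx3 : (3:ℝ) ≤ x := by linarith
  have hx0 : (0:ℝ) < x := by linarith
  obtain ⟨hIntD, hD⟩ := my_hasDerivAt_mu Λ (x := x) hx3
  set D := ∫ p in Icc (0:ℝ) 1, muDerivInt x p ∂Λ with hDdef
  have hkd : HasDerivAt (kappa Λ) ((D * x - mu Λ x * 1) / x ^ 2) x :=
    hD.div (hasDerivAt_id x) (by simpa using hx0.ne')
  rw [hkd.deriv]
  -- integrability facts
  have hIntMu : Integrable (muInt x) (Λ.restrict (Icc 0 1)) :=
    my_int_of_bound (my_meas_muInt x) (x * (x - 1) / 2) (fun p hp => by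
      have h := my_muInt_bounds hx3 hp
      rw [Real.norm_eq_abs, abs_of_nonneg h.1]; exact h.2)
  have hIntLam : Integrable (lamInt x) (Λ.restrict (Icc 0 1)) :=
    my_int_of_bound (my_meas_lamInt x) (x * (x - 1) / 2) (fun p hp => by
      have h := my_lamInt_bounds hx3 hp
      have h0 : 0 ≤ lamInt x p := by
        refine le_trans ?_ h.1
        have h1 : (0:ℝ) ≤ (1 - p) ^ (x - 2) := Real.rpow_nonneg (by linarith [hp.2]) _
        exact mul_nonneg (by nlinarith) h1
      rw [Real.norm_eq_abs, abs_of_nonneg h0]; exact h.2)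
  have hIntPow : Integrable (fun p => (1 - p) ^ (x - 2)) (Λ.restrict (Icc 0 1)) :=
    my_int_of_bound (my_meas_rpow (x - 2)) 1 (fun p hp => by
      rw [Real.norm_eq_abs, abs_of_nonneg (Real.rpow_nonneg (by linarith [hp.2]) _)]
      exact Real.rpow_le_one (by linarith [hp.2]) (by linarith [hp.1]) (by linarith))
  set lamx := lam Λ x with hlamx
  set I := ∫ p in Icc (0:ℝ) 1, (1 - p) ^ (x - 2) ∂Λ with hIdef
  set G := ∫ p in Icc (0:ℝ) 1, (x * muDerivInt x p - muInt x p - lamInt x p) ∂Λ with hGdef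
  have hIntG1 : Integrable (fun p => x * muDerivInt x p) (Λ.restrict (Icc 0 1)) :=
    hIntD.const_mul x
  have hIntG2 : Integrable (fun p => x * muDerivInt x p - muInt x p) (Λ.restrict (Icc 0 1)) :=
    hIntG1.sub hIntMu
  have hIntG3 : Integrable (fun p => x * muDerivInt x p - muInt x p - lamInt x p)
      (Λ.restrict (Icc 0 1)) := hIntG2.sub hIntLam
  have hIntxPow : Integrable (fun p => x * (1 - p) ^ (x - 2)) (Λ.restrict (Icc 0 1)) :=
    hIntPow.const_mul x
  have hIntcPow : Integrable (fun p => x * (x - 1) / 2 * (1 - p) ^ (x - 2))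
      (Λ.restrict (Icc 0 1)) := hIntPow.const_mul _
  have hG : G = x * D - mu Λ x - lamx := by
    rw [hGdef, integral_sub hIntG2 hIntLam, integral_sub hIntG1 hIntMu, integral_const_mul]
    rfl
  have hGnonneg : 0 ≤ G :=
    setIntegral_nonneg measurableSet_Icc (fun p hp => (my_gInt_bounds hx3 hp).1)
  have hGle : G ≤ x * I := by
    have h := setIntegral_mono_on hIntG3 hIntxPow measurableSet_Icc
      (fun p hp => (my_gInt_bounds hx3 hp).2)
    rwa [integral_const_mul] at h
  have hInonneg : 0 ≤ I :=
    setIntegral_nonneg measurableSet_Icc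
      (fun p hp => Real.rpow_nonneg (by linarith [hp.2]) _)
  have hlam_ge : x * (x - 1) / 2 * I ≤ lamx := by
    have h := setIntegral_mono_on hIntcPow hIntLam
      measurableSet_Icc (fun p hp => (my_lamInt_bounds hx3 hp).1)
    rwa [integral_const_mul] at h
  have hlam_nonneg : 0 ≤ lamx := by nlinarith
  -- rewrite the difference as G / x ^ 2
  have heq : (D * x - mu Λ x * 1) / x ^ 2 - lamx / x ^ 2 = G / x ^ 2 := by
    rw [hG]; ring
  rw [heq, abs_of_nonneg (div_nonneg hGnonneg (by positivity))]
  -- main estimate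
  have s2 : I ≤ 4 * lamx / x ^ 2 := by
    rw [le_div_iff₀ (by positivity)]
    nlinarith
  have s3 : G / x ^ 2 ≤ 4 * lamx / x ^ 3 := by
    rw [div_le_div_iff₀ (by positivity) (by positivity)]
    have : G ≤ 4 * lamx / x := by
      have := mul_le_mul_of_nonneg_left s2 hx0.le
      calc G ≤ x * I := hGle
        _ ≤ x * (4 * lamx / x ^ 2) := this
        _ = 4 * lamx / x := by field_simp
    calc G * x ^ 3 ≤ (4 * lamx / x) * x ^ 3 := by nlinarith [pow_pos hx0 3]
      _ = 4 * lamx * x ^ 2 := by field_simp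
  have hxpow : (1:ℝ) / x ^ 3 ≤ x ^ (-2 - χ) := by
    have h1 : x ^ (-3:ℝ) ≤ x ^ (-2 - χ) :=
      Real.rpow_le_rpow_of_exponent_le (by linarith) (by linarith)
    have h2 : x ^ (-3:ℝ) = 1 / x ^ 3 := by
      rw [show (-3:ℝ) = -((3:ℕ):ℝ) by norm_num, Real.rpow_neg hx0.le, Real.rpow_natCast,
        one_div]
    linarith [h2 ▸ h1]
  calc G / x ^ 2 ≤ 4 * lamx / x ^ 3 := s3
    _ = 4 * lamx * (1 / x ^ 3) := by ring
    _ ≤ 4 * lamx * x ^ (-2 - χ) := by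
        apply mul_le_mul_of_nonneg_left hxpow (by linarith)
    _ = 4 * lamx * x ^ (-2 - χ) := rfl
end

section
/- Assume Λ({0}) = 0. Then for all integers 1 ≤ k ≤ b−1 one has λ(b) − Σ_{j=2}^{k} C(b,j) λ_{b,j} = C(b,k)(b−k) ∫_0^1 y^k (1−y)^{b−k−1} T(y) dy, where the sum on the left is empty for k = 1 and C(b,k) denotes the binomial coefficient. -/
open MeasureTheory Real Set Filter Topology

/-- The merging rate `λ_{b,k} = ∫_{[0,1]} p^{k−2} (1−p)^{b−k} Λ(dp)`. -/
noncomputable def lamBK (Λ : Measure ℝ) (b k : ℕ) : ℝ :=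
  ∫ p in Set.Icc (0:ℝ) 1, p ^ ((k : ℝ) - 2) * (1 - p) ^ ((b : ℝ) - (k : ℝ)) ∂Λ

lemma chooseId1 (b j : ℕ) (hb : 1 ≤ b) (hj : 1 ≤ j) :
    b * (b-1).choose (j-1) = b.choose j * j := by
  have h := Nat.add_one_mul_choose_eq (b-1) (j-1)
  rw [show (b-1)+1 = b by omega, show (j-1)+1 = j by omega] at h
  exact h

lemma chooseId2 (b j : ℕ) (hb : 1 ≤ b) :
    b * (b-1).choose j = b.choose j * (b - j) := by
  have h1 := Nat.add_one_mul_choose_eq (b-1) j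
  rw [show (b-1)+1 = b by omega] at h1
  rw [h1]
  exact Nat.choose_succ_right_eq b j

lemma sum_deriv (b k : ℕ) (hk : 1 ≤ k) (hkb : k < b) (p : ℝ) :
    ∑ j ∈ Finset.Icc (k+1) b, ((b.choose j : ℝ) *
      (((j:ℝ) * p^(j-1)) * (1-p)^(b-j) + p^j * (((b-j : ℕ):ℝ) * (1-p)^(b-j-1) * (-1))))
    = (b.choose k : ℝ) * (((b-k : ℕ)):ℝ) * (p^k * (1-p)^(b-k-1)) := by
  set g : ℕ → ℝ := fun j => (b : ℝ) * ((b-1).choose j : ℝ) * (p^j * (1-p)^(b-1-j)) with hg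
  have hterm : ∀ j ∈ Finset.Icc (k+1) b, (b.choose j : ℝ) *
      (((j:ℝ) * p^(j-1)) * (1-p)^(b-j) + p^j * (((b-j : ℕ):ℝ) * (1-p)^(b-j-1) * (-1)))
      = g (j-1) - g j := by
    intro j hj
    simp only [Finset.mem_Icc] at hj
    have hj1 : 1 ≤ j := by omega
    have hb1 : 1 ≤ b := by omega
    have e1 : b - 1 - (j-1) = b - j := by omega
    have e2 : b - 1 - j = b - j - 1 := by omega
    have c1 : ((b:ℝ) * ((b-1).choose (j-1) : ℝ)) = (b.choose j : ℝ) * (j:ℝ) := by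
      exact_mod_cast congrArg (Nat.cast : ℕ → ℝ) (chooseId1 b j hb1 hj1)
    have c2 : ((b:ℝ) * ((b-1).choose j : ℝ)) = (b.choose j : ℝ) * ((b-j:ℕ):ℝ) := by
      exact_mod_cast congrArg (Nat.cast : ℕ → ℝ) (chooseId2 b j hb1)
    rw [hg]
    simp only [e1, e2]
    rw [mul_assoc (b:ℝ), mul_assoc (b:ℝ)] at *
    rw [show (b:ℝ) * (((b-1).choose (j-1) : ℝ) * (p^(j-1) * (1-p)^(b-j))) =
        ((b:ℝ) * ((b-1).choose (j-1) : ℝ)) * (p^(j-1) * (1-p)^(b-j)) by ring,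
      show (b:ℝ) * (((b-1).choose j : ℝ) * (p^j * (1-p)^(b-j-1))) =
        ((b:ℝ) * ((b-1).choose j : ℝ)) * (p^j * (1-p)^(b-j-1)) by ring, c1, c2]
    ring
  rw [Finset.sum_congr rfl hterm]
  have hIcc : Finset.Icc (k+1) b = Finset.Ico (k+1) (b+1) := by
    rw [Finset.Ico_add_one_right_eq_Icc]
  rw [hIcc, Finset.sum_Ico_eq_sum_range]
  have hidx : ∀ i, g (k+1+i-1) - g (k+1+i) = (fun i => g (k+i)) i - (fun i => g (k+i)) (i+1) := by
    intro i
    have : k+1+i-1 = k+i := by omega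
    have h2 : k+1+i = k+(i+1) := by omega
    simp [this, h2]
  calc ∑ i ∈ Finset.range (b+1-(k+1)), (g (k+1+i-1) - g (k+1+i))
      = ∑ i ∈ Finset.range (b-k), ((fun i => g (k+i)) i - (fun i => g (k+i)) (i+1)) := by
        rw [show b+1-(k+1) = b-k by omega]; exact Finset.sum_congr rfl fun i _ => hidx i
    _ = g (k+0) - g (k+(b-k)) := Finset.sum_range_sub' (fun i => g (k+i)) (b-k)
    _ = (b.choose k : ℝ) * (((b-k : ℕ)):ℝ) * (p^k * (1-p)^(b-k-1)) := by
        have : k + (b-k) = b := by omega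
        rw [this, Nat.add_zero]
        have hgb : g b = 0 := by
          rw [hg]; simp [Nat.choose_eq_zero_of_lt (show b-1 < b by omega)]
        rw [hgb, sub_zero, hg]
        have e3 : b-1-k = b-k-1 := by omega
        have c3 : ((b:ℝ) * ((b-1).choose k : ℝ)) = (b.choose k : ℝ) * ((b-k:ℕ):ℝ) := by
          exact_mod_cast congrArg (Nat.cast : ℕ → ℝ) (chooseId2 b k (by omega))
        simp only [e3]
        rw [c3]

lemma tail_eq (b k : ℕ) (hk : 1 ≤ k) (hkb : k < b) (p : ℝ) :
    ∑ j ∈ Finset.Icc (k+1) b, (b.choose j : ℝ) * (p^j * (1-p)^(b-j)) =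
    (b.choose k : ℝ) * (((b-k:ℕ)):ℝ) * ∫ y in (0:ℝ)..p, y^k * (1-y)^(b-k-1) := by
  set F : ℝ → ℝ := fun q => ∑ j ∈ Finset.Icc (k+1) b, (b.choose j : ℝ) * (q^j * (1-q)^(b-j))
    with hF
  have hderiv : ∀ q : ℝ, HasDerivAt F
      ((b.choose k : ℝ) * (((b-k:ℕ)):ℝ) * (q^k * (1-q)^(b-k-1))) q := by
    intro q
    rw [← sum_deriv b k hk hkb q]
    apply HasDerivAt.fun_sum
    intro j _
    have h1 : HasDerivAt (fun x : ℝ => x^j) ((j:ℝ) * q^(j-1)) q := hasDerivAt_pow j q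
    have h0 : HasDerivAt (fun x : ℝ => 1 - x) (-1) q := (hasDerivAt_id q).const_sub 1
    have h2 : HasDerivAt (fun x : ℝ => (1-x)^(b-j))
        (((b-j:ℕ):ℝ) * (1-q)^(b-j-1) * (-1)) q := h0.pow (b-j)
    exact (h1.mul h2).const_mul _
  have hcont : Continuous (fun y : ℝ =>
      (b.choose k : ℝ) * (((b-k:ℕ)):ℝ) * (y^k * (1-y)^(b-k-1))) := by fun_prop
  have hFTC := intervalIntegral.integral_eq_sub_of_hasDerivAt
      (f := F) (a := 0) (b := p)
      (fun x _ => hderiv x) (hcont.intervalIntegrable 0 p)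
  have hF0 : F 0 = 0 := by
    rw [hF]
    apply Finset.sum_eq_zero
    intro j hj
    simp only [Finset.mem_Icc] at hj
    rw [zero_pow (by omega : j ≠ 0)]
    ring
  rw [hF0, sub_zero] at hFTC
  rw [intervalIntegral.integral_const_mul] at hFTC
  exact hFTC.symm

lemma binom_split (b : ℕ) (hb : 2 ≤ b) (p : ℝ) :
    ∑ j ∈ Finset.Icc 2 b, (b.choose j : ℝ) * (p^j * (1-p)^(b-j)) =
      1 - (1-p)^b - (b:ℝ)*p*(1-p)^(b-1) := by
  have hbin := add_pow p (1-p) b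
  rw [show p + (1-p) = 1 by ring, one_pow] at hbin
  -- hbin : 1 = ∑ j ∈ range (b+1), p^j * (1-p)^(b-j) * C(b,j)
  set f : ℕ → ℝ := fun j => p^j * (1-p)^(b-j) * (b.choose j : ℝ) with hf
  have h1 : (1:ℝ) = ∑ i ∈ Finset.range b, f (i+1) + f 0 := by
    rw [hbin]; exact Finset.sum_range_succ' f b
  have h2 : ∑ i ∈ Finset.range b, f (i+1)
      = ∑ i ∈ Finset.range (b-1), f (i+2) + f 1 := by
    rw [show b = (b-1)+1 by omega]
    exact Finset.sum_range_succ' (fun i => f (i+1)) (b-1)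
  have h3 : ∑ j ∈ Finset.Icc 2 b, (b.choose j : ℝ) * (p^j * (1-p)^(b-j))
      = ∑ i ∈ Finset.range (b-1), f (i+2) := by
    rw [show Finset.Icc 2 b = Finset.Ico 2 (b+1) by rw [Finset.Ico_add_one_right_eq_Icc],
      Finset.sum_Ico_eq_sum_range, show b+1-2 = b-1 by omega]
    refine Finset.sum_congr rfl fun i _ => ?_
    rw [hf, show 2+i = i+2 by omega]; ring
  have hf0 : f 0 = (1-p)^b := by rw [hf]; simp
  have hf1 : f 1 = (b:ℝ)*p*(1-p)^(b-1) := by rw [hf]; simp; ring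
  rw [h3]
  rw [h2, hf0, hf1] at h1
  linarith

lemma lamInt_eq_s11 (b : ℕ) (hb : 2 ≤ b) {p : ℝ} (hp : p ∈ Set.Ioc (0:ℝ) 1) :
    lamInt (b:ℝ) p = ∑ j ∈ Finset.Icc 2 b, (b.choose j : ℝ) * (p^(j-2) * (1-p)^(b-j)) := by
  have hp0 : p ≠ 0 := ne_of_gt hp.1
  rw [lamInt, if_neg hp0]
  have e1 : (1-p) ^ ((b:ℕ):ℝ) = (1-p)^b := Real.rpow_natCast _ b
  have e2 : (1-p) ^ ((b:ℝ) - 1) = (1-p)^(b-1) := by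
    rw [show ((b:ℝ) - 1) = ((b-1:ℕ):ℝ) by rw [Nat.cast_sub (by omega)]; norm_num,
      Real.rpow_natCast]
  rw [e1, e2, ← binom_split b hb p, Finset.sum_div]
  refine Finset.sum_congr rfl fun j hj => ?_
  simp only [Finset.mem_Icc] at hj
  have : p^j = p^(j-2) * p^2 := by rw [← pow_add]; congr 1; omega
  rw [this]
  field_simp

lemma tail_div (b k : ℕ) (hk : 1 ≤ k) (hkb : k < b) {p : ℝ} (hp0 : p ≠ 0) :
    ∑ j ∈ Finset.Icc (k+1) b, (b.choose j : ℝ) * (p^(j-2) * (1-p)^(b-j)) =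
    (b.choose k : ℝ) * (((b-k:ℕ)):ℝ) *
      ((1/p^2) * ∫ y in (0:ℝ)..p, y^k * (1-y)^(b-k-1)) := by
  have h : ∑ j ∈ Finset.Icc (k+1) b, (b.choose j : ℝ) * (p^(j-2) * (1-p)^(b-j))
      = (∑ j ∈ Finset.Icc (k+1) b, (b.choose j : ℝ) * (p^j * (1-p)^(b-j))) / p^2 := by
    rw [Finset.sum_div]
    refine Finset.sum_congr rfl fun j hj => ?_
    simp only [Finset.mem_Icc] at hj
    have : p^j = p^(j-2) * p^2 := by rw [← pow_add]; congr 1; omega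
    rw [this]
    field_simp
  rw [h, tail_eq b k hk hkb p]
  field_simp

lemma rpow_term_eq (b j : ℕ) (h2 : 2 ≤ j) (hjb : j ≤ b) (p : ℝ) :
    p ^ ((j:ℝ)-2) * (1-p) ^ ((b:ℝ)-(j:ℝ)) = p^(j-2) * (1-p)^(b-j) := by
  rw [show ((j:ℝ)-2) = ((j-2:ℕ):ℝ) by rw [Nat.cast_sub h2]; norm_num,
    Real.rpow_natCast,
    show ((b:ℝ)-(j:ℝ)) = ((b-j:ℕ):ℝ) by rw [Nat.cast_sub hjb],
    Real.rpow_natCast]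


/-- If `Λ({0}) = 0`, then for all integers `1 ≤ k ≤ b−1`,
`λ(b) − Σ_{j=2}^{k} C(b,j) λ_{b,j} = C(b,k)(b−k) ∫_0^1 y^k (1−y)^{b−k−1} T(y) dy`,
where the sum is empty for `k = 1`. -/
theorem lam_partial_sum_repr (Λ : Measure ℝ) [IsFiniteMeasure Λ] (hΛ : Λ ≠ 0)
    (hsupp : Λ (Set.Icc (0:ℝ) 1)ᶜ = 0) (h0 : Λ {0} = 0) :
    ∀ b k : ℕ, 1 ≤ k → k < b →
      lam Λ (b : ℝ) - ∑ j ∈ Finset.Icc 2 k, (b.choose j : ℝ) * lamBK Λ b j =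
        (b.choose k : ℝ) * ((b : ℝ) - (k : ℝ)) *
          ∫ y in (0:ℝ)..1, y ^ (k : ℝ) * (1 - y) ^ ((b : ℝ) - (k : ℝ) - 1) * T Λ y := by
  intro b k hk hkb
  have hb2 : 2 ≤ b := by omega
  -- the set [0,1] agrees a.e. with (0,1]
  have hsets : Set.Icc (0:ℝ) 1 =ᵐ[Λ] Set.Ioc (0:ℝ) 1 := by
    rw [MeasureTheory.ae_eq_set]
    constructor
    · rw [show Set.Icc (0:ℝ) 1 \ Set.Ioc 0 1 = {0} by
        ext x
        simp only [Set.mem_diff, Set.mem_Icc, Set.mem_Ioc, Set.mem_singleton_iff]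
        constructor
        · rintro ⟨⟨h1, h2⟩, h3⟩
          by_contra hx
          exact h3 ⟨lt_of_le_of_ne h1 (Ne.symm hx), h2⟩
        · rintro rfl
          norm_num]
      exact h0
    · rw [Set.diff_eq_empty.mpr Set.Ioc_subset_Icc_self]; simp
  set ter : ℕ → ℝ → ℝ := fun j p => p^(j-2) * (1-p)^(b-j) with hter
  have hter_int : ∀ j, IntegrableOn (ter j) (Set.Ioc (0:ℝ) 1) Λ := by
    intro j
    have hc : Continuous (ter j) := by fun_prop
    exact (hc.continuousOn.integrableOn_compact isCompact_Icc).mono_set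
      Set.Ioc_subset_Icc_self
  -- lam as a sum of integrals
  have hlam : lam Λ (b:ℝ) = ∑ j ∈ Finset.Icc 2 b,
      (b.choose j : ℝ) * ∫ p in Set.Ioc (0:ℝ) 1, ter j p ∂Λ := by
    rw [lam, MeasureTheory.setIntegral_congr_set hsets,
      MeasureTheory.setIntegral_congr_fun measurableSet_Ioc
        (fun p hp => lamInt_eq_s11 b hb2 hp),
      MeasureTheory.integral_finset_sum _
        (fun j _ => ((hter_int j).const_mul _))]
    exact Finset.sum_congr rfl fun j _ => integral_const_mul _ _
  -- lamBK as integral of ter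
  have hlamBK : ∀ j ∈ Finset.Icc 2 k, lamBK Λ b j
      = ∫ p in Set.Ioc (0:ℝ) 1, ter j p ∂Λ := by
    intro j hj
    simp only [Finset.mem_Icc] at hj
    rw [lamBK, MeasureTheory.setIntegral_congr_set hsets]
    exact MeasureTheory.integral_congr_ae (Filter.Eventually.of_forall fun p =>
      rpow_term_eq b j hj.1 (le_trans hj.2 hkb.le) p)
  -- split the sum
  set A : ℕ → ℝ := fun j => (b.choose j : ℝ) * ∫ p in Set.Ioc (0:ℝ) 1, ter j p ∂Λ with hA
  have hun : Finset.Icc 2 k ∪ Finset.Icc (k+1) b = Finset.Icc 2 b := by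
    ext x; simp only [Finset.mem_union, Finset.mem_Icc]; omega
  have hdis : Disjoint (Finset.Icc 2 k) (Finset.Icc (k+1) b) := by
    rw [Finset.disjoint_left]
    intro x hx1 hx2
    simp only [Finset.mem_Icc] at hx1 hx2
    omega
  have hL2 : ∑ j ∈ Finset.Icc 2 k, (b.choose j : ℝ) * lamBK Λ b j
      = ∑ j ∈ Finset.Icc 2 k, A j :=
    Finset.sum_congr rfl fun j hj => by rw [hA, hlamBK j hj]
  have hLHS : lam Λ (b:ℝ) - ∑ j ∈ Finset.Icc 2 k, (b.choose j : ℝ) * lamBK Λ b j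
      = ∑ j ∈ Finset.Icc (k+1) b, A j := by
    rw [hlam, hL2, ← hun, Finset.sum_union hdis]
    ring
  rw [hLHS]
  -- abbreviations
  set Cst : ℝ := (b.choose k : ℝ) * ((b-k:ℕ):ℝ) with hCst
  set φ : ℝ → ℝ := fun y => y^k * (1-y)^(b-k-1) with hφ
  have hφcont : Continuous φ := by fun_prop
  have hsum_int : ∑ j ∈ Finset.Icc (k+1) b, A j
      = ∫ p in Set.Ioc (0:ℝ) 1,
          (∑ j ∈ Finset.Icc (k+1) b, (b.choose j : ℝ) * ter j p) ∂Λ := by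
    rw [MeasureTheory.integral_finset_sum _ (fun j _ => ((hter_int j).const_mul _))]
    exact Finset.sum_congr rfl fun j _ => (integral_const_mul _ _).symm
  have hpt : ∀ p ∈ Set.Ioc (0:ℝ) 1,
      (∑ j ∈ Finset.Icc (k+1) b, (b.choose j : ℝ) * ter j p)
      = Cst * ((1/p^2) * ∫ y in (0:ℝ)..p, φ y) :=
    fun p hp => tail_div b k hk hkb (ne_of_gt hp.1)
  -- Fubini setup
  set ν := (volume : Measure ℝ).restrict (Set.Ioc (0:ℝ) 1) with hν
  set μ := Λ.restrict (Set.Ioc (0:ℝ) 1) with hμ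
  set Fn : ℝ × ℝ → ℝ := fun q => if q.2 < q.1 then (1/q.1^2) * φ q.2 else 0 with hFn
  have hrep : ∀ p : ℝ, (fun y => Fn (p, y))
      = Set.indicator (Set.Iio p) (fun y => (1/p^2) * φ y) := by
    intro p; funext y
    rw [Set.indicator_apply]
    simp only [hFn, Set.mem_Iio]
  have hrep2 : ∀ y : ℝ, (fun p => Fn (p, y))
      = Set.indicator (Set.Ioi y) (fun p => (1/p^2) * φ y) := by
    intro y; funext p
    rw [Set.indicator_apply]
    simp only [hFn, Set.mem_Ioi]
  have hIoo : ∀ p ∈ Set.Ioc (0:ℝ) 1, Set.Iio p ∩ Set.Ioc (0:ℝ) 1 = Set.Ioo 0 p := by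
    intro p hp
    ext y
    simp only [Set.mem_inter_iff, Set.mem_Iio, Set.mem_Ioc, Set.mem_Ioo]
    constructor
    · rintro ⟨h1, h2, h3⟩; exact ⟨h2, h1⟩
    · rintro ⟨h1, h2⟩; exact ⟨h2, h1, le_trans h2.le hp.2⟩
  have hFn_meas : AEStronglyMeasurable Fn (μ.prod ν) := by
    have hset : MeasurableSet {q : ℝ × ℝ | q.2 < q.1} :=
      measurableSet_lt measurable_snd measurable_fst
    have heq : Fn = Set.indicator {q : ℝ × ℝ | q.2 < q.1}
        (fun q => (1/q.1^2) * φ q.2) := by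
      funext q; rw [Set.indicator_apply]; rfl
    rw [heq]
    refine (Measurable.indicator ?_ hset).aestronglyMeasurable
    fun_prop
  have hFp_int : ∀ p : ℝ, Integrable (fun y => Fn (p, y)) ν := by
    intro p
    rw [hrep p]
    refine Integrable.indicator ?_ measurableSet_Iio
    exact (((continuous_const.mul hφcont).continuousOn).integrableOn_compact
      isCompact_Icc).mono_set Set.Ioc_subset_Icc_self
  have hinner : ∀ p ∈ Set.Ioc (0:ℝ) 1,
      ∫ y, Fn (p, y) ∂ν = (1/p^2) * ∫ y in (0:ℝ)..p, φ y := by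
    intro p hp
    rw [hrep p, MeasureTheory.integral_indicator measurableSet_Iio, hν,
      MeasureTheory.Measure.restrict_restrict measurableSet_Iio, hIoo p hp,
      integral_const_mul]
    congr 1
    rw [intervalIntegral.integral_of_le hp.1.le]
    exact MeasureTheory.setIntegral_congr_set Ioo_ae_eq_Ioc
  have hinner2 : ∀ y ∈ Set.Ioc (0:ℝ) 1,
      ∫ p, Fn (p, y) ∂μ = φ y * T Λ y := by
    intro y hy
    rw [hrep2 y, MeasureTheory.integral_indicator measurableSet_Ioi, hμ,
      MeasureTheory.Measure.restrict_restrict measurableSet_Ioi]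
    have hIoc : Set.Ioi y ∩ Set.Ioc (0:ℝ) 1 = Set.Ioc y 1 := by
      ext p
      simp only [Set.mem_inter_iff, Set.mem_Ioi, Set.mem_Ioc]
      constructor
      · rintro ⟨h1, _, h3⟩; exact ⟨h1, h3⟩
      · rintro ⟨h1, h2⟩; exact ⟨h1, lt_trans hy.1 h1, h2⟩
    rw [hIoc, T,
      show (fun p : ℝ => (1/p^2) * φ y) = fun p : ℝ => φ y * (1/p^2) by
        funext p; ring,
      integral_const_mul]
  have hGint : ∀ p : ℝ,
      Integrable (Set.indicator (Set.Iio p) (fun y => (1/p^2) * y)) ν := by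
    intro p
    refine Integrable.indicator ?_ measurableSet_Iio
    have : Continuous (fun y : ℝ => (1/p^2) * y) := by fun_prop
    exact ((this.continuousOn).integrableOn_compact isCompact_Icc).mono_set
      Set.Ioc_subset_Icc_self
  have hbound : ∀ p ∈ Set.Ioc (0:ℝ) 1, ∫ y, ‖Fn (p, y)‖ ∂ν ≤ 1 := by
    intro p hp
    have hp0 : p ≠ 0 := ne_of_gt hp.1
    have hle : (fun y => ‖Fn (p, y)‖)
        ≤ᵐ[ν] Set.indicator (Set.Iio p) (fun y => (1/p^2) * y) := by
      rw [hν]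
      filter_upwards [MeasureTheory.ae_restrict_mem measurableSet_Ioc] with y hy
      rw [show ‖Fn (p, y)‖
        = ‖Set.indicator (Set.Iio p) (fun y => (1/p^2) * φ y) y‖ by rw [← hrep p]]
      by_cases hyp : y < p
      · rw [Set.indicator_of_mem (show y ∈ Set.Iio p from hyp),
          Set.indicator_of_mem (show y ∈ Set.Iio p from hyp)]
        have hφnn : 0 ≤ φ y :=
          mul_nonneg (pow_nonneg hy.1.le _) (pow_nonneg (by linarith [hy.2]) _)
        rw [Real.norm_eq_abs, abs_of_nonneg (mul_nonneg (by positivity) hφnn)]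
        refine mul_le_mul_of_nonneg_left ?_ (by positivity)
        have h1 : y^k ≤ y := by
          have := pow_le_pow_of_le_one hy.1.le hy.2 hk
          simpa using this
        have h2 : (1-y)^(b-k-1) ≤ 1 :=
          pow_le_one₀ (by linarith [hy.2]) (by linarith [hy.1])
        calc φ y = y^k * (1-y)^(b-k-1) := rfl
          _ ≤ y * 1 := mul_le_mul h1 h2
              (pow_nonneg (by linarith [hy.2]) _) hy.1.le
          _ = y := mul_one y
      · rw [Set.indicator_of_notMem (show y ∉ Set.Iio p from hyp),
          Set.indicator_of_notMem (show y ∉ Set.Iio p from hyp), norm_zero]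
    calc ∫ y, ‖Fn (p, y)‖ ∂ν
        ≤ ∫ y, Set.indicator (Set.Iio p) (fun y => (1/p^2) * y) y ∂ν :=
          MeasureTheory.integral_mono_ae ((hFp_int p).norm) (hGint p) hle
      _ = (1/p^2) * (p^2/2) := by
          rw [MeasureTheory.integral_indicator measurableSet_Iio, hν,
            MeasureTheory.Measure.restrict_restrict measurableSet_Iio, hIoo p hp,
            integral_const_mul]
          congr 1
          rw [MeasureTheory.setIntegral_congr_set Ioo_ae_eq_Ioc,
            ← intervalIntegral.integral_of_le hp.1.le, integral_id]
          ring
      _ ≤ 1 := by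
          rw [show (1/p^2) * (p^2/2) = 1/2 by field_simp]
          norm_num
  have hnormint : Integrable (fun p => ∫ y, ‖Fn (p, y)‖ ∂ν) μ := by
    refine MeasureTheory.Integrable.mono' (integrable_const (1:ℝ))
      (hFn_meas.norm.integral_prod_right') ?_
    rw [hμ]
    filter_upwards [MeasureTheory.ae_restrict_mem measurableSet_Ioc] with p hp
    rw [Real.norm_eq_abs, abs_of_nonneg
      (MeasureTheory.integral_nonneg fun y => norm_nonneg _)]
    exact hbound p hp
  have hFn_int : Integrable Fn (μ.prod ν) :=
    (MeasureTheory.integrable_prod_iff hFn_meas).2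
      ⟨Filter.Eventually.of_forall hFp_int, hnormint⟩
  have hswap : ∫ p, (∫ y, Fn (p, y) ∂ν) ∂μ = ∫ y, (∫ p, Fn (p, y) ∂μ) ∂ν :=
    MeasureTheory.integral_integral_swap hFn_int
  -- assemble
  rw [hsum_int,
    MeasureTheory.setIntegral_congr_fun measurableSet_Ioc (fun p hp => hpt p hp),
    integral_const_mul]
  have h5 : ∫ p in Set.Ioc (0:ℝ) 1, ((1/p^2) * ∫ y in (0:ℝ)..p, φ y) ∂Λ
      = ∫ y in Set.Ioc (0:ℝ) 1, φ y * T Λ y := by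
    have e1 : ∫ p in Set.Ioc (0:ℝ) 1, ((1/p^2) * ∫ y in (0:ℝ)..p, φ y) ∂Λ
        = ∫ p, (∫ y, Fn (p, y) ∂ν) ∂μ :=
      MeasureTheory.setIntegral_congr_fun measurableSet_Ioc
        (fun p hp => (hinner p hp).symm)
    rw [e1, hswap]
    exact MeasureTheory.setIntegral_congr_fun measurableSet_Ioc
      (fun y hy => hinner2 y hy)
  rw [h5]
  have h6 : ∫ y in (0:ℝ)..1, y ^ (k:ℝ) * (1-y) ^ ((b:ℝ)-(k:ℝ)-1) * T Λ y
      = ∫ y in Set.Ioc (0:ℝ) 1, φ y * T Λ y := by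
    rw [intervalIntegral.integral_of_le (by norm_num : (0:ℝ) ≤ 1)]
    refine MeasureTheory.integral_congr_ae (Filter.Eventually.of_forall fun y => ?_)
    show y ^ (k:ℝ) * (1-y) ^ ((b:ℝ)-(k:ℝ)-1) * T Λ y = φ y * T Λ y
    have ec : ((b:ℝ)-(k:ℝ)-1) = ((b-k-1:ℕ):ℝ) := by
      rw [show b-k-1 = b-(k+1) by omega, Nat.cast_sub hkb]
      push_cast; ring
    rw [Real.rpow_natCast, ec, Real.rpow_natCast]
  rw [h6, hCst, Nat.cast_sub hkb.le]
end
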